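/- The quadratic Toda bracket π₂ on ℝ^{2N-1}, defined by {a_i,a_{i+1}} = (1/2)a_i a_{i+1}, {a_i,b_i} = -a_i b_i, {a_i,b_{i+1}} = a_i b_{i+1}, {b_i,b_{i+1}} = 2a_i², and all other coordinate brackets zero, satisfies the Jacobi identity. -/

import Mathlib

/-- Partial derivative of a function on `ι → ℝ` in the `i`-th coordinate direction. -/
noncomputable def pd {ι : Type*} [Fintype ι] [DecidableEq ι]
    (i : ι) (f : (ι → ℝ) → ℝ) (x : ι → ℝ) : ℝ :=
  fderiv ℝ f x (Pi.single i 1)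

/-- Jacobi identity for a bracket given by a coefficient matrix `π`. -/
def JacobiId {ι : Type*} [Fintype ι] [DecidableEq ι]
    (π : ι → ι → (ι → ℝ) → ℝ) : Prop :=
  ∀ (i j k : ι) (x : ι → ℝ),
    (∑ l, (π l i x * pd l (π j k) x + π l j x * pd l (π k i) x
        + π l k x * pd l (π i j) x)) = 0

/-- The quadratic Toda bracket π₂ on ℝ^{2N-1} (`M = N - 1`).
Nonzero coordinate brackets: {a_i, a_{i+1}} = (1/2) a_i a_{i+1},
{a_i, b_i} = -a_i b_i, {a_i, b_{i+1}} = a_i b_{i+1}, {b_i, b_{i+1}} = 2 a_i². -/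
noncomputable def pi2 (M : ℕ) :
    (Fin M ⊕ Fin (M+1)) → (Fin M ⊕ Fin (M+1)) → ((Fin M ⊕ Fin (M+1)) → ℝ) → ℝ
  | .inl i, .inl j => fun x =>
      if (i : ℕ) + 1 = (j : ℕ) then (1/2) * x (.inl i) * x (.inl j)
      else if (j : ℕ) + 1 = (i : ℕ) then -((1/2) * x (.inl j) * x (.inl i))
      else 0
  | .inl i, .inr j => fun x =>
      if j = i.castSucc then -(x (.inl i) * x (.inr j))
      else if j = i.succ then x (.inl i) * x (.inr j) else 0
  | .inr j, .inl i => fun x =>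
      if j = i.castSucc then x (.inl i) * x (.inr j)
      else if j = i.succ then -(x (.inl i) * x (.inr j)) else 0
  | .inr i, .inr j => fun x =>
      if h : (i : ℕ) + 1 = (j : ℕ) then
        2 * (x (.inl ⟨(i : ℕ), by have := j.isLt; omega⟩))^2
      else if h : (j : ℕ) + 1 = (i : ℕ) then
        -(2 * (x (.inl ⟨(j : ℕ), by have := i.isLt; omega⟩))^2)
      else 0

/-- coefficient and the two coordinate indices of `pi2 M i j`. -/
noncomputable def dat (M : ℕ) :
    (Fin M ⊕ Fin (M+1)) → (Fin M ⊕ Fin (M+1)) →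
      ℝ × (Fin M ⊕ Fin (M+1)) × (Fin M ⊕ Fin (M+1))
  | .inl i, .inl j =>
      if (i : ℕ) + 1 = (j : ℕ) then (1/2, .inl i, .inl j)
      else if (j : ℕ) + 1 = (i : ℕ) then (-(1/2), .inl j, .inl i)
      else (0, .inl i, .inl i)
  | .inl i, .inr j =>
      if j = i.castSucc then (-1, .inl i, .inr j)
      else if j = i.succ then (1, .inl i, .inr j) else (0, .inl i, .inl i)
  | .inr j, .inl i =>
      if j = i.castSucc then (1, .inl i, .inr j)
      else if j = i.succ then (-1, .inl i, .inr j) else (0, .inl i, .inl i)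
  | .inr i, .inr j =>
      if h : (i : ℕ) + 1 = (j : ℕ) then
        (2, .inl ⟨(i : ℕ), by have := j.isLt; omega⟩, .inl ⟨(i : ℕ), by have := j.isLt; omega⟩)
      else if h : (j : ℕ) + 1 = (i : ℕ) then
        (-2, .inl ⟨(j : ℕ), by have := i.isLt; omega⟩, .inl ⟨(j : ℕ), by have := i.isLt; omega⟩)
      else (0, .inr i, .inr i)

lemma pi2_eq (M : ℕ) (i j : Fin M ⊕ Fin (M+1)) :
    pi2 M i j = fun x => (dat M i j).1 * x (dat M i j).2.1 * x (dat M i j).2.2 := by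
  cases i <;> cases j <;> (funext x; simp only [pi2, dat]; split_ifs <;> ring)

lemma pd_cmul {ι : Type*} [Fintype ι] [DecidableEq ι] (c : ℝ) (p q l : ι) (x : ι → ℝ) :
    pd l (fun y => c * y p * y q) x
      = c * ((if p = l then (1:ℝ) else 0) * x q + x p * (if q = l then 1 else 0)) := by
  have h1 : HasFDerivAt (fun y : ι → ℝ => y p)
      (ContinuousLinearMap.proj p : (ι → ℝ) →L[ℝ] ℝ) x :=
    (ContinuousLinearMap.proj p : (ι → ℝ) →L[ℝ] ℝ).hasFDerivAt
  have h2 : HasFDerivAt (fun y : ι → ℝ => y q)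
      (ContinuousLinearMap.proj q : (ι → ℝ) →L[ℝ] ℝ) x :=
    (ContinuousLinearMap.proj q : (ι → ℝ) →L[ℝ] ℝ).hasFDerivAt
  have h3 : HasFDerivAt (fun y : ι → ℝ => c * y p * y q) _ x := (h1.const_mul c).mul h2
  unfold pd
  rw [h3.fderiv]
  simp [Pi.single_apply]
  split_ifs <;> ring

lemma pd_pi2 (M : ℕ) (l i j : Fin M ⊕ Fin (M+1)) (x : (Fin M ⊕ Fin (M+1)) → ℝ) :
    pd l (pi2 M i j) x
      = (dat M i j).1 * ((if (dat M i j).2.1 = l then (1:ℝ) else 0) * x (dat M i j).2.2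
          + x (dat M i j).2.1 * (if (dat M i j).2.2 = l then 1 else 0)) := by
  rw [pi2_eq]; exact pd_cmul _ _ _ _ _

lemma sum_collapse' {ι : Type*} [Fintype ι] [DecidableEq ι]
    (f : ι → ℝ) (c : ℝ) (p q : ι) (x : ι → ℝ) :
    ∑ l, f l * (c * ((if p = l then (1:ℝ) else 0) * x q + x p * (if q = l then 1 else 0)))
      = c * (f p * x q + x p * f q) := by
  have h : ∀ l, f l * (c * ((if p = l then (1:ℝ) else 0) * x q + x p * (if q = l then 1 else 0)))
      = (if p = l then c * f l * x q else 0) + (if q = l then c * x p * f l else 0) := by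
    intro l; split_ifs <;> ring
  rw [Finset.sum_congr rfl (fun l _ => h l), Finset.sum_add_distrib,
    Finset.sum_ite_eq, Finset.sum_ite_eq]
  simp; ring

set_option maxHeartbeats 4000000 in
/-- The quadratic Toda bracket satisfies the Jacobi identity. -/
theorem pi2_jacobi (M : ℕ) : JacobiId (pi2 M) := by
  intro i j k x
  simp only [pd_pi2, Finset.sum_add_distrib, sum_collapse']
  cases i <;> cases j <;> cases k
  all_goals (simp only [dat]; split_ifs <;> (try dsimp only) <;> (try simp only [pi2]) <;> (try split_ifs))
  all_goals (try (exfalso; omega))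
  all_goals (try ring)
  all_goals (try (exfalso; simp only [Fin.ext_iff, Fin.val_succ, Fin.coe_castSucc] at *; omega))
  all_goals (try subst_vars)
  all_goals (try ring)
  all_goals (try (simp only [Fin.coe_castSucc, Fin.val_succ] at *))
  all_goals (try generalize_proofs)
  all_goals (try subst_vars)
  all_goals (try ring)
  all_goals (try (simp only [Fin.castSucc_mk, Fin.succ_mk, Fin.eta] at *))
  all_goals (try subst_vars)
  all_goals (try ring)
  all_goals (try (simp only [Nat.add_comm] at *))
  all_goals (try (generalize_proofs at *))
  all_goals (try subst_vars)
  all_goals ring
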